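/- Fix 0 < α ≤ 1. For every integer n ≥ 1, one has 1 + (n+1)^α / ∑_{k=1}^n k^α ≤ 1 + (α+1)/n, and combining with the upper bound ∑_{k=1}^n k^α ≤ (α/(α+1))·n^α(n+1)^α/((n+1)^α − n^α), inequality (3.1) — namely (∑_{k=1}^n k^α / n^α)·log( (1 + (n+1)^α/∑_{k=1}^n k^α)·(n/(n+1))^α ) ≤ 1/(α+1) — follows from the inequality α·( log(1 + (α+1)/n) − α·log(1+1/n) ) ≤ 1 − (1+1/n)^{−α}. That is: for 0 < α < 1 and n ≥ 1, the inequality α·(log(1+(α+1)/n) − α·log(1+1/n)) ≤ 1 − (1+1/n)^{−α} implies (∑_{k=1}^n k^α / n^α)·log( (1 + (n+1)^α/∑_{k=1}^n k^α)·(n/(n+1))^α ) ≤ 1/(α+1). -/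

import Mathlib

open Real

private lemma hd_add (p x : ℝ) (hx : -1 < x) :
    HasDerivAt (fun t : ℝ => (1+t)^p) (p*(1+x)^(p-1)*1) x := by
  have h1 : HasDerivAt (fun t : ℝ => 1+t) 1 x := by
    simpa using (hasDerivAt_id x).const_add (1:ℝ)
  have h2 := Real.hasDerivAt_rpow_const (x := 1+x) (p := p) (Or.inl (by linarith))
  exact h2.comp x h1

private lemma hd_sub (p x : ℝ) (hx : x < 1) :
    HasDerivAt (fun t : ℝ => (1-t)^p) (p*(1-x)^(p-1)*(-1)) x := by
  have h1 : HasDerivAt (fun t : ℝ => 1-t) (-1) x := by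
    simpa using (hasDerivAt_id x).const_sub (1:ℝ)
  have h2 := Real.hasDerivAt_rpow_const (x := 1-x) (p := p) (Or.inl (ne_of_gt (by linarith)))
  exact h2.comp x h1

private lemma lemB (β : ℝ) (hβ0 : 0 < β) (hβ1 : β < 1) :
    ∀ x ∈ Set.Icc (0:ℝ) 1, 2*β*x ≤ (1+x)^β - (1-x)^β := by
  set f : ℝ → ℝ := fun t => (1+t)^β - (1-t)^β - 2*β*t with hf
  have hder : ∀ x ∈ Set.Ioo (0:ℝ) 1,
      HasDerivAt f (β*(1+x)^(β-1)*1 - β*(1-x)^(β-1)*(-1) - 2*β) x := by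
    intro x hx
    exact ((hd_add β x (by linarith [hx.1])).sub (hd_sub β x hx.2)).sub
      (by simpa using (hasDerivAt_id x).const_mul (2*β))
  have hcont : Continuous f := by
    apply Continuous.sub
    apply Continuous.sub
    · exact (continuous_const.add continuous_id).rpow_const (fun x => Or.inr hβ0.le)
    · exact (continuous_const.sub continuous_id).rpow_const (fun x => Or.inr hβ0.le)
    · exact (continuous_const.mul continuous_id)
  have hmono : MonotoneOn f (Set.Icc 0 1) := by
    apply monotoneOn_of_deriv_nonneg (convex_Icc 0 1) hcont.continuousOn
    · intro x hx
      rw [interior_Icc] at hx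
      exact ((hder x hx).differentiableAt).differentiableWithinAt
    · intro x hx
      rw [interior_Icc] at hx
      rw [(hder x hx).deriv]
      have h1x : (0:ℝ) < 1 + x := by linarith [hx.1]
      have h2x : (0:ℝ) < 1 - x := by linarith [hx.2]
      set u := (1+x)^(β-1) with hu
      set v := (1-x)^(β-1) with hv
      have hu1 : u ≤ 1 := Real.rpow_le_one_of_one_le_of_nonpos (by linarith [hx.1]) (by linarith)
      have hv1 : 1 ≤ v :=
        Real.one_le_rpow_of_pos_of_le_one_of_nonpos h2x (by linarith [hx.1]) (by linarith)
      have huv : 1 ≤ u*v := by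
        rw [hu, hv, ← Real.mul_rpow h1x.le h2x.le]
        exact Real.one_le_rpow_of_pos_of_le_one_of_nonpos (mul_pos h1x h2x) (by nlinarith [sq_nonneg x])
          (by linarith)
      nlinarith [mul_nonneg (sub_nonneg.2 hu1) (sub_nonneg.2 hv1), hβ0.le,
        mul_nonneg hβ0.le (by nlinarith : (0:ℝ) ≤ u + v - 2)]
  intro x hx
  have h0 : f 0 = 0 := by simp [hf]
  have := hmono (Set.mem_Icc.2 ⟨le_refl 0, zero_le_one⟩) hx hx.1
  rw [h0] at this
  simp only [hf] at this
  linarith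

private lemma lemC (α : ℝ) (hα0 : 0 < α) (hα1 : α < 1) :
    ∀ x ∈ Set.Icc (0:ℝ) 1,
      (1+x)^α + (1-x)^α ≤ (α+1) + (1-α)*((1+x)^α*(1-x)^α) := by
  set f : ℝ → ℝ := fun t => (α+1) + (1-α)*((1+t)^α*(1-t)^α) - (1+t)^α - (1-t)^α with hf
  have hder : ∀ x ∈ Set.Ioo (0:ℝ) 1,
      HasDerivAt f ((1-α)*(α*(1+x)^(α-1)*1*((1-x)^α) + ((1+x)^α)*(α*(1-x)^(α-1)*(-1)))
        - α*(1+x)^(α-1)*1 - α*(1-x)^(α-1)*(-1)) x := by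
    intro x hx
    have h1 := hd_add α x (by linarith [hx.1])
    have h2 := hd_sub α x hx.2
    exact ((((h1.mul h2).const_mul (1-α)).const_add (α+1)).sub h1).sub h2
  have hcont : Continuous f := by
    have c1 : Continuous (fun t : ℝ => (1+t)^α) :=
      (continuous_const.add continuous_id).rpow_const (fun x => Or.inr hα0.le)
    have c2 : Continuous (fun t : ℝ => (1-t)^α) :=
      (continuous_const.sub continuous_id).rpow_const (fun x => Or.inr hα0.le)
    exact ((continuous_const.add (continuous_const.mul (c1.mul c2))).sub c1).sub c2
  have hmono : MonotoneOn f (Set.Icc 0 1) := by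
    apply monotoneOn_of_deriv_nonneg (convex_Icc 0 1) hcont.continuousOn
    · intro x hx
      rw [interior_Icc] at hx
      exact ((hder x hx).differentiableAt).differentiableWithinAt
    · intro x hx
      rw [interior_Icc] at hx
      rw [(hder x hx).deriv]
      have h1x : (0:ℝ) < 1 + x := by linarith [hx.1]
      have h2x : (0:ℝ) < 1 - x := by linarith [hx.2]
      have hp : (0:ℝ) < (1+x)^(α-1) := Real.rpow_pos_of_pos h1x _
      have hq : (0:ℝ) < (1-x)^(α-1) := Real.rpow_pos_of_pos h2x _
      have hP : (1+x)^α = (1+x)^(α-1) * (1+x) := by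
        nth_rewrite 1 [show α = (α-1)+1 by ring]
        rw [Real.rpow_add h1x, Real.rpow_one]
      have hQ : (1-x)^α = (1-x)^(α-1) * (1-x) := by
        nth_rewrite 1 [show α = (α-1)+1 by ring]
        rw [Real.rpow_add h2x, Real.rpow_one]
      -- from lemB with β = 1-α
      have hB := lemB (1-α) (by linarith) (by linarith) x ⟨hx.1.le, hx.2.le⟩
      have e1 : (1+x)^(α-1) * (1+x)^(1-α) = 1 := by
        rw [← Real.rpow_add h1x]; norm_num
      have e2 : (1-x)^(α-1) * (1-x)^(1-α) = 1 := by
        rw [← Real.rpow_add h2x]; norm_num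
      -- multiply hB by pq > 0
      have key : 2*(1-α)*x * ((1+x)^(α-1) * (1-x)^(α-1)) ≤
          (1-x)^(α-1) - (1+x)^(α-1) := by
        have := mul_le_mul_of_nonneg_right hB (le_of_lt (mul_pos hp hq))
        calc 2*(1-α)*x * ((1+x)^(α-1) * (1-x)^(α-1))
            ≤ ((1+x)^(1-α) - (1-x)^(1-α)) * ((1+x)^(α-1) * (1-x)^(α-1)) := this
          _ = (1-x)^(α-1) * ((1+x)^(α-1) * (1+x)^(1-α))
              - (1+x)^(α-1) * ((1-x)^(α-1) * (1-x)^(1-α)) := by ring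
          _ = (1-x)^(α-1) - (1+x)^(α-1) := by rw [e1, e2]; ring
      rw [hP, hQ]
      nlinarith [mul_pos hp hq, hx.1, hx.2]
  intro x hx
  have h0 : f 0 = 0 := by simp [hf]; ring
  have := hmono (Set.mem_Icc.2 ⟨le_refl 0, zero_le_one⟩) hx hx.1
  rw [h0] at this
  simp only [hf] at this
  linarith

private lemma lemD (α : ℝ) (hα0 : 0 < α) (hα1 : α < 1) :
    ∀ n : ℕ, 1 ≤ n →
      (n:ℝ) * ((n:ℝ)+1)^α ≤ (α+1) * ∑ k ∈ Finset.Icc 1 n, (k:ℝ)^α := by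
  intro n hn
  induction n, hn using Nat.le_induction with
  | base =>
    have h2 : ((1:ℝ)+1)^α ≤ 1 + α*1 :=
      rpow_one_add_le_one_add_mul_self (by norm_num) hα0.le hα1.le
    simp only [Finset.Icc_self, Finset.sum_singleton, Nat.cast_one, Real.one_rpow]
    norm_num at h2 ⊢
    linarith
  | succ n hn ih =>
    rw [Finset.sum_Icc_succ_top (by omega : 1 ≤ n+1)]
    have hn0 : (0:ℝ) ≤ (n:ℝ) := Nat.cast_nonneg n
    have hb : (0:ℝ) < ((n:ℝ)+1)^α := Real.rpow_pos_of_pos (by linarith) α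
    have hpos1 : (0:ℝ) ≤ 1/((n:ℝ)+1) := by positivity
    have hber : ((1:ℝ) + 1/((n:ℝ)+1))^α ≤ 1 + α*(1/((n:ℝ)+1)) :=
      rpow_one_add_le_one_add_mul_self (by linarith) hα0.le hα1.le
    have ha' : ((n:ℝ)+2)^α = ((n:ℝ)+1)^α * ((1:ℝ)+1/((n:ℝ)+1))^α := by
      have ex : ((n:ℝ)+2) = ((n:ℝ)+1)*((1:ℝ)+1/((n:ℝ)+1)) := by
        field_simp
        ring
      rw [ex, Real.mul_rpow (by positivity : (0:ℝ) ≤ (n:ℝ)+1)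
        (by positivity : (0:ℝ) ≤ (1:ℝ)+1/((n:ℝ)+1))]
    have h' : ((n:ℝ)+1) * ((n:ℝ)+2)^α ≤ ((n:ℝ)+1+α) * ((n:ℝ)+1)^α := by
      rw [ha']
      calc ((n:ℝ)+1) * (((n:ℝ)+1)^α * ((1:ℝ)+1/((n:ℝ)+1))^α)
          ≤ ((n:ℝ)+1) * (((n:ℝ)+1)^α * (1 + α*(1/((n:ℝ)+1)))) := by
            apply mul_le_mul_of_nonneg_left
              (mul_le_mul_of_nonneg_left hber hb.le) (by positivity)
        _ = ((n:ℝ)+1+α) * ((n:ℝ)+1)^α := by field_simp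
    push_cast
    have e : (n:ℝ)+1+1 = (n:ℝ)+2 := by ring
    rw [e]
    nlinarith [ih, hb]

private lemma lemE (α : ℝ) (hα0 : 0 < α) (hα1 : α < 1) :
    ∀ n : ℕ, 1 ≤ n →
      (α+1) * (∑ k ∈ Finset.Icc 1 n, (k:ℝ)^α) * (((n:ℝ)+1)^α - (n:ℝ)^α) ≤
        α * (n:ℝ)^α * ((n:ℝ)+1)^α := by
  intro n hn
  induction n, hn using Nat.le_induction with
  | base =>
    have h2 : ((1:ℝ)+1)^α ≤ 1 + α*1 :=
      rpow_one_add_le_one_add_mul_self (by norm_num) hα0.le hα1.le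
    have h3 : (0:ℝ) < ((1:ℝ)+1)^α := Real.rpow_pos_of_pos (by norm_num) α
    simp only [Finset.Icc_self, Finset.sum_singleton, Nat.cast_one, Real.one_rpow]
    nlinarith
  | succ n hn ih =>
    rw [Finset.sum_Icc_succ_top (by omega : 1 ≤ n+1)]
    have hn1 : (1:ℝ) ≤ (n:ℝ) := by exact_mod_cast hn
    set S := ∑ k ∈ Finset.Icc 1 n, (k:ℝ)^α with hS
    set c := (n:ℝ)^α with hcdef
    set b := ((n:ℝ)+1)^α with hbdef
    set a := ((n:ℝ)+2)^α with hadef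
    have hc : (0:ℝ) < c := Real.rpow_pos_of_pos (by linarith) α
    have hb : (0:ℝ) < b := Real.rpow_pos_of_pos (by linarith) α
    have ha : (0:ℝ) < a := Real.rpow_pos_of_pos (by linarith) α
    have hcb : c < b := Real.rpow_lt_rpow (by linarith) (by linarith) hα0
    have hba : b < a := Real.rpow_lt_rpow (by positivity) (by linarith) hα0
    -- crux inequality from lemC
    have hx : (1:ℝ)/((n:ℝ)+1) ∈ Set.Icc (0:ℝ) 1 := by
      constructor
      · positivity
      · rw [div_le_one (by linarith)]; linarith
    have h := lemC α hα0 hα1 (1/((n:ℝ)+1)) hx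
    have ex1 : (1:ℝ) + 1/((n:ℝ)+1) = ((n:ℝ)+2)/((n:ℝ)+1) := by field_simp; ring
    have ex2 : (1:ℝ) - 1/((n:ℝ)+1) = (n:ℝ)/((n:ℝ)+1) := by field_simp; ring
    rw [ex1, ex2, Real.div_rpow (by positivity) (by positivity),
      Real.div_rpow (by positivity) (by positivity)] at h
    rw [← hadef, ← hbdef, ← hcdef, div_mul_div_comm] at h
    have crux : a*b + c*b ≤ (α+1)*(b*b) + (1-α)*(c*a) := by
      have h2 := mul_le_mul_of_nonneg_right h (le_of_lt (mul_pos hb hb))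
      have hbb : b*b ≠ 0 := by positivity
      have e1 : (a/b + c/b)*(b*b) = a*b + c*b := by field_simp
      have e2 : ((α+1) + (1-α)*(a*c/(b*b)))*(b*b) = (α+1)*(b*b) + (1-α)*(c*a) := by
        rw [add_mul, mul_assoc, div_mul_cancel₀ _ hbb]; ring
      rw [e1, e2] at h2
      exact h2
    have key : (α+1)*(S + b)*(a-b)*(b-c) ≤ α*b*a*(b-c) := by
      nlinarith [mul_le_mul_of_nonneg_right ih (le_of_lt (sub_pos.2 hba)),
        mul_le_mul_of_nonneg_right crux hb.le]
    have key2 : (α+1)*(S + b)*(a-b) ≤ α*b*a :=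
      (mul_le_mul_iff_of_pos_right (sub_pos.2 hcb)).1 key
    push_cast
    have e : (n:ℝ)+1+1 = (n:ℝ)+2 := by ring
    rw [e]
    nlinarith [key2]

/-- Reduction step in the proof of Theorem 2: for `0 < α < 1` and `n ≥ 1`,
inequality (3.2) implies inequality (3.1). -/
theorem ineq_32_implies_31 (α : ℝ) (hα0 : 0 < α) (hα1 : α < 1) (n : ℕ) (hn : 1 ≤ n)
    (h32 : α * (Real.log (1 + (α + 1) / n) - α * Real.log (1 + 1 / n)) ≤
      1 - (1 + 1 / (n : ℝ)) ^ (-α)) :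
    ((∑ k ∈ Finset.Icc 1 n, (k : ℝ) ^ α) / (n : ℝ) ^ α) *
      Real.log ((1 + ((n : ℝ) + 1) ^ α / ∑ k ∈ Finset.Icc 1 n, (k : ℝ) ^ α) *
        ((n : ℝ) / ((n : ℝ) + 1)) ^ α) ≤ 1 / (α + 1) := by
  set S := ∑ k ∈ Finset.Icc 1 n, (k:ℝ)^α with hSdef
  have hn1 : (1:ℝ) ≤ (n:ℝ) := by exact_mod_cast hn
  have hnpos : (0:ℝ) < (n:ℝ) := by linarith
  have hc : (0:ℝ) < (n:ℝ)^α := Real.rpow_pos_of_pos hnpos α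
  have hb : (0:ℝ) < ((n:ℝ)+1)^α := Real.rpow_pos_of_pos (by linarith) α
  have hcb : (n:ℝ)^α < ((n:ℝ)+1)^α := Real.rpow_lt_rpow hnpos.le (by linarith) hα0
  have hS : (0:ℝ) < S := by
    apply Finset.sum_pos
    · intro k hk
      have hk1 : 1 ≤ k := (Finset.mem_Icc.1 hk).1
      have : (0:ℝ) < (k:ℝ) := by exact_mod_cast Nat.lt_of_lt_of_le Nat.zero_lt_one hk1
      exact Real.rpow_pos_of_pos this α
    · exact ⟨1, Finset.mem_Icc.2 ⟨le_refl 1, hn⟩⟩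
  have hB : (0:ℝ) < ((n:ℝ)/((n:ℝ)+1))^α := Real.rpow_pos_of_pos (by positivity) α
  have hD' := lemD α hα0 hα1 n hn
  have hAle : 1 + ((n:ℝ)+1)^α / S ≤ 1 + (α+1)/(n:ℝ) := by
    have h : ((n:ℝ)+1)^α / S ≤ (α+1)/(n:ℝ) := by
      rw [div_le_div_iff₀ hS hnpos]
      nlinarith [hD']
    linarith
  have hlogB : Real.log (((n:ℝ)/((n:ℝ)+1))^α) = - (α * Real.log (1+1/(n:ℝ))) := by
    rw [Real.log_rpow (by positivity)]
    have e : (1:ℝ)+1/(n:ℝ) = ((n:ℝ)/((n:ℝ)+1))⁻¹ := by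
      rw [inv_div]
      field_simp
    rw [e, Real.log_inv]
    ring
  have hlog : Real.log ((1 + ((n:ℝ)+1)^α / S) * ((n:ℝ)/((n:ℝ)+1))^α)
      ≤ Real.log (1 + (α+1)/(n:ℝ)) - α * Real.log (1+1/(n:ℝ)) := by
    have h1 : (1 + ((n:ℝ)+1)^α/S) * ((n:ℝ)/((n:ℝ)+1))^α
        ≤ (1+(α+1)/(n:ℝ)) * ((n:ℝ)/((n:ℝ)+1))^α :=
      mul_le_mul_of_nonneg_right hAle hB.le
    calc Real.log ((1 + ((n:ℝ)+1)^α / S) * ((n:ℝ)/((n:ℝ)+1))^α)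
        ≤ Real.log ((1+(α+1)/(n:ℝ)) * ((n:ℝ)/((n:ℝ)+1))^α) :=
          Real.log_le_log (by positivity) h1
      _ = Real.log (1+(α+1)/(n:ℝ)) + Real.log (((n:ℝ)/((n:ℝ)+1))^α) :=
          Real.log_mul (by positivity) hB.ne'
      _ = Real.log (1 + (α+1)/(n:ℝ)) - α * Real.log (1+1/(n:ℝ)) := by
          rw [hlogB]; ring
  rcases le_or_gt (Real.log ((1 + ((n:ℝ)+1)^α / S) * ((n:ℝ)/((n:ℝ)+1))^α)) 0 with hL | hL
  · have h0 : S/(n:ℝ)^α * Real.log ((1 + ((n:ℝ)+1)^α / S) * ((n:ℝ)/((n:ℝ)+1))^α) ≤ 0 :=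
      mul_nonpos_of_nonneg_of_nonpos (by positivity) hL
    have h1 : (0:ℝ) < 1/(α+1) := by positivity
    linarith
  · have hpow : ((1:ℝ)+1/(n:ℝ))^(-α) = (n:ℝ)^α/((n:ℝ)+1)^α := by
      rw [show (1:ℝ)+1/(n:ℝ) = (((n:ℝ)+1)/(n:ℝ)) by field_simp,
        Real.rpow_neg (by positivity),
        Real.div_rpow (by positivity) (by positivity), inv_div]
    rw [hpow] at h32
    have e32 : (1:ℝ) - (n:ℝ)^α/((n:ℝ)+1)^α = (((n:ℝ)+1)^α - (n:ℝ)^α)/((n:ℝ)+1)^α := by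
      field_simp
    rw [e32] at h32
    have hDle : Real.log (1 + (α+1)/(n:ℝ)) - α * Real.log (1+1/(n:ℝ))
        ≤ (((n:ℝ)+1)^α - (n:ℝ)^α)/(α*((n:ℝ)+1)^α) := by
      rw [le_div_iff₀ (by positivity)]
      have h := mul_le_mul_of_nonneg_right h32 hb.le
      rw [div_mul_cancel₀ _ hb.ne'] at h
      nlinarith [h]
    have hE := lemE α hα0 hα1 n hn
    calc S/(n:ℝ)^α * Real.log ((1 + ((n:ℝ)+1)^α / S) * ((n:ℝ)/((n:ℝ)+1))^α)
        ≤ S/(n:ℝ)^α * (Real.log (1 + (α+1)/(n:ℝ)) - α * Real.log (1+1/(n:ℝ))) :=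
          mul_le_mul_of_nonneg_left hlog (by positivity)
      _ ≤ S/(n:ℝ)^α * ((((n:ℝ)+1)^α - (n:ℝ)^α)/(α*((n:ℝ)+1)^α)) :=
          mul_le_mul_of_nonneg_left hDle (by positivity)
      _ ≤ 1/(α+1) := by
          rw [div_mul_div_comm, div_le_div_iff₀ (by positivity) (by positivity)]
          nlinarith [hE]
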